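/- Let F, G be coprime completely reducible homogeneous polynomials of the same degree d ≥ 1 in R = MvPolynomial (Fin (n+1)) ℂ, let P_1 = F, P_2 = G, P_3, …, P_k be pairwise distinct completely reducible members of the pencil 𝒫 with product Q̃ and radical Q, and let a_i = (Q/Q̃)·(F·∂_iG − G·∂_iF) be the polynomial coefficients of ω = (Q/Q̃)(F dG − G dF). Then for every linear factor α = Σ_j c_j x_j of Q and all indices 0 ≤ i, j ≤ n, the linear form α divides c_i·a_j − c_j·a_i (i.e. α divides the coefficients of dα ∧ ω, so each hyperplane of the arrangement is invariant by the associated foliation). -/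

import Mathlib

open MvPolynomial

noncomputable section

/-- A linear form: a nonzero homogeneous polynomial of degree 1. -/
def IsLinearForm (n : ℕ) (α : MvPolynomial (Fin (n + 1)) ℂ) : Prop :=
  α ≠ 0 ∧ α.IsHomogeneous 1

/-- A completely reducible polynomial: a product of linear forms. -/
def CompletelyReducible (n : ℕ) (P : MvPolynomial (Fin (n + 1)) ℂ) : Prop :=
  ∃ s : Multiset (MvPolynomial (Fin (n + 1)) ℂ),
    (∀ α ∈ s, IsLinearForm n α) ∧ P = s.prod

/-- F and G have no common non-unit factor. -/
def RelPrime (n : ℕ) (F G : MvPolynomial (Fin (n + 1)) ℂ) : Prop :=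
  ∀ p : MvPolynomial (Fin (n + 1)) ℂ, p ∣ F → p ∣ G → IsUnit p

/-- The generic fiber of the pencil generated by F and G is irreducible. -/
def GenericFiberIrreducible (n : ℕ) (F G : MvPolynomial (Fin (n + 1)) ℂ) : Prop :=
  {c : ℂ | ¬ Irreducible (F + C c * G)}.Finite

lemma degree_single_one {N : ℕ} (j : Fin N) : Finsupp.degree (Finsupp.single j 1) = 1 := by
  simp [Finsupp.degree_apply, Finsupp.support_single_ne_zero j one_ne_zero]

lemma degree_one_eq_single {N : ℕ} (m : Fin N →₀ ℕ) (h : Finsupp.degree m = 1) :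
    ∃ j, m = Finsupp.single j 1 := by
  have hne : m.support.Nonempty := by
    by_contra hc
    rw [Finset.not_nonempty_iff_eq_empty] at hc
    rw [Finsupp.degree_apply, hc] at h
    simp at h
  obtain ⟨j, hj⟩ := hne
  have hcard : m.support.card ≤ 1 := by
    have h2 := Finset.card_nsmul_le_sum m.support m 1 (fun x hx => by
      exact Nat.one_le_iff_ne_zero.mpr (Finsupp.mem_support_iff.mp hx))
    rw [Finsupp.degree] at h
    simp only [smul_eq_mul, mul_one] at h2
    have h3 : m.support.sum ⇑m = 1 := h
    omega
  have hsupp : m.support = {j} := by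
    apply Finset.eq_singleton_iff_unique_mem.mpr
    exact ⟨hj, fun x hx => by
      by_contra hne
      have : ({x, j} : Finset (Fin N)) ⊆ m.support := by
        intro y hy; simp at hy; rcases hy with rfl | rfl <;> assumption
      have := Finset.card_le_card this
      rw [Finset.card_insert_of_notMem (by simpa using hne)] at this
      simp at this; omega⟩
  obtain ⟨hj0, hm⟩ := Finsupp.support_eq_singleton.mp hsupp
  have : m j = 1 := by
    rw [Finsupp.degree_apply, hsupp, Finset.sum_singleton] at h; exact h
  rw [this] at hm
  exact ⟨j, hm⟩

lemma linear_rep {N : ℕ} {α : MvPolynomial (Fin N) ℂ} (h : α.IsHomogeneous 1) :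
    α = ∑ i, C (α.coeff (Finsupp.single i 1)) * X i := by
  apply MvPolynomial.ext
  intro m
  rw [coeff_sum]
  by_cases hm : Finsupp.degree m = 1
  · obtain ⟨j, rfl⟩ := degree_one_eq_single m hm
    rw [Finset.sum_eq_single j]
    · rw [coeff_C_mul, coeff_X', if_pos rfl, mul_one]
    · intro i _ hij
      rw [coeff_C_mul, coeff_X', if_neg, mul_zero]
      simp [Finsupp.single_eq_single_iff, hij]
    · simp
  · rw [h.coeff_eq_zero hm]
    apply (Finset.sum_eq_zero _).symm
    intro i _
    rw [coeff_C_mul, coeff_X', if_neg, mul_zero]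
    intro hc
    exact hm (hc ▸ degree_single_one i)

lemma pderiv_linear {N : ℕ} {α : MvPolynomial (Fin N) ℂ} (h : α.IsHomogeneous 1) (i : Fin N) :
    pderiv i α = C (α.coeff (Finsupp.single i 1)) := by
  conv_lhs => rw [linear_rep h]
  rw [map_sum, Finset.sum_eq_single i]
  · rw [pderiv_C_mul, pderiv_X_self, mul_one]
  · intro j _ hij
    rw [pderiv_C_mul, pderiv_X_of_ne hij, mul_zero]
  · simp

lemma exists_coeff_ne_zero {N : ℕ} {α : MvPolynomial (Fin N) ℂ} (h0 : α ≠ 0)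
    (h : α.IsHomogeneous 1) : ∃ i, α.coeff (Finsupp.single i 1) ≠ 0 := by
  by_contra hc
  push_neg at hc
  apply h0
  rw [linear_rep h]
  apply Finset.sum_eq_zero
  intro i _
  rw [hc i, map_zero, zero_mul]

lemma prime_of_equiv {R S : Type*} [CommRing R] [CommRing S] (e : R ≃+* S) {p : R}
    (h : Prime (e p)) : Prime p := (MulEquiv.prime_iff e.toMulEquiv).mp h

lemma prime_X_mv {N : ℕ} (i0 : Fin (N + 1)) :
    Prime (X i0 : MvPolynomial (Fin (N + 1)) ℂ) := by
  have h0 : Prime (X 0 : MvPolynomial (Fin (N + 1)) ℂ) := by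
    apply prime_of_equiv (MvPolynomial.finSuccEquiv ℂ N).toRingEquiv
    have : (MvPolynomial.finSuccEquiv ℂ N).toRingEquiv (X 0) = Polynomial.X := by
      simp [finSuccEquiv_X_zero]
    rw [this]
    exact Polynomial.prime_X
  apply prime_of_equiv (renameEquiv ℂ (Equiv.swap i0 (0 : Fin (N+1)))).toRingEquiv
  have : (renameEquiv ℂ (Equiv.swap i0 (0 : Fin (N+1)))).toRingEquiv (X i0) = X 0 := by
    simp
  rw [this]
  exact h0

lemma exists_linear_aut {N : ℕ} {α : MvPolynomial (Fin (N + 1)) ℂ}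
    (h0 : α ≠ 0) (h : α.IsHomogeneous 1) :
    ∃ (e : MvPolynomial (Fin (N + 1)) ℂ ≃ₐ[ℂ] MvPolynomial (Fin (N + 1)) ℂ)
      (i0 : Fin (N + 1)),
      e (X i0) = α ∧
      ∀ p : MvPolynomial (Fin (N + 1)) ℂ, p.IsHomogeneous 1 →
        (e.symm p).IsHomogeneous 1 := by
  obtain ⟨i0, hc⟩ := exists_coeff_ne_zero h0 h
  set c := α.coeff (Finsupp.single i0 1) with hcdef
  set β : MvPolynomial (Fin (N+1)) ℂ := α - C c * X i0 with hβ
  have hβrep : β = ∑ i ∈ Finset.univ.erase i0, C (α.coeff (Finsupp.single i 1)) * X i := by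
    rw [hβ]
    conv_lhs => rw [linear_rep h]
    rw [← Finset.add_sum_erase _ _ (Finset.mem_univ i0)]
    ring
  have hβH : β.IsHomogeneous 1 := h.sub (isHomogeneous_C_mul_X c i0)
  set v : Fin (N+1) → MvPolynomial (Fin (N+1)) ℂ :=
    fun j => if j = i0 then C c⁻¹ * (X i0 - β) else X j with hv
  set w : Fin (N+1) → MvPolynomial (Fin (N+1)) ℂ :=
    fun j => if j = i0 then α else X j with hw
  have hαrep : α = C c * X i0 + β := by rw [hβ]; ring
  have hCc : (C c : MvPolynomial (Fin (N+1)) ℂ) * C c⁻¹ = 1 := by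
    rw [← C_mul, mul_inv_cancel₀ hc, C_1]
  have hfβ : aeval v β = β := by
    rw [hβrep, map_sum]
    apply Finset.sum_congr rfl
    intro i hi
    rw [map_mul, aeval_C, aeval_X, hv]
    simp [algebraMap_eq, (Finset.mem_erase.mp hi).1]
  have hgβ : aeval w β = β := by
    rw [hβrep, map_sum]
    apply Finset.sum_congr rfl
    intro i hi
    rw [map_mul, aeval_C, aeval_X, hw]
    simp [algebraMap_eq, (Finset.mem_erase.mp hi).1]
  have hfg : (aeval v).comp (aeval w) = AlgHom.id ℂ (MvPolynomial (Fin (N+1)) ℂ) := by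
    apply algHom_ext
    intro j
    simp only [AlgHom.comp_apply, aeval_X, AlgHom.id_apply]
    by_cases hj : j = i0
    · have hwj : w j = α := by simp [hw, hj]
      have key : aeval v α = X i0 := by
        conv_lhs => rw [hαrep]
        rw [map_add, map_mul, aeval_C, aeval_X, hfβ]
        have hvj : v i0 = C c⁻¹ * (X i0 - β) := by simp [hv]
        rw [hvj, algebraMap_eq, ← mul_assoc, hCc, one_mul]
        ring
      rw [hwj, key, hj]
    · simp [hw, hv, hj]
  have hgf : (aeval w).comp (aeval v) = AlgHom.id ℂ (MvPolynomial (Fin (N+1)) ℂ) := by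
    apply algHom_ext
    intro j
    simp only [AlgHom.comp_apply, aeval_X, AlgHom.id_apply]
    by_cases hj : j = i0
    · have hvj : v j = C c⁻¹ * (X i0 - β) := by simp [hv, hj]
      have key : aeval w (C c⁻¹ * (X i0 - β)) = X i0 := by
        rw [map_mul, map_sub, aeval_C, aeval_X, hgβ]
        have hwj : w i0 = α := by simp [hw]
        rw [hwj, algebraMap_eq]
        have : α - β = C c * X i0 := by rw [hαrep]; ring
        rw [this, ← mul_assoc, mul_comm (C c⁻¹) (C c), hCc, one_mul]
      rw [hvj, key, hj]
    · simp [hw, hv, hj]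
  refine ⟨AlgEquiv.ofAlgHom (aeval w) (aeval v) hgf hfg, i0, ?_, ?_⟩
  · simp [AlgEquiv.ofAlgHom, hw]
  · intro p hp
    have hsymm : ∀ q, (AlgEquiv.ofAlgHom (aeval w) (aeval v) hgf hfg).symm q = aeval v q := by
      intro q; rfl
    rw [hsymm]
    have hvH : ∀ i, (v i).IsHomogeneous 1 := by
      intro i
      by_cases hi : i = i0
      · simp only [hv, if_pos hi]
        exact ((isHomogeneous_X ℂ i0).sub hβH).C_mul c⁻¹
      · simp only [hv, if_neg hi]
        exact isHomogeneous_X ℂ i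
    simpa using hp.aeval v hvH

lemma linear_prime {N : ℕ} {α : MvPolynomial (Fin (N + 1)) ℂ}
    (h0 : α ≠ 0) (h : α.IsHomogeneous 1) : Prime α := by
  obtain ⟨e, i0, he, -⟩ := exists_linear_aut h0 h
  have h2 : Prime (e.toRingEquiv.toMulEquiv (X i0)) :=
    (MulEquiv.prime_iff _).mpr (prime_X_mv i0)
  simpa [he] using h2

lemma linear_dvd_linear {N : ℕ} {α β : MvPolynomial (Fin (N + 1)) ℂ}
    (h0 : α ≠ 0) (h : α.IsHomogeneous 1) (hβ : β.IsHomogeneous 1) (hdvd : α ∣ β) :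
    ∃ d : ℂ, β = C d * α := by
  obtain ⟨e, i0, he, hsym⟩ := exists_linear_aut h0 h
  have h1 : X i0 ∣ e.symm β := by
    have h2 := map_dvd e.symm hdvd
    rwa [show e.symm α = X i0 from by rw [← he, AlgEquiv.symm_apply_apply]] at h2
  obtain ⟨q, hq⟩ := h1
  set γ := e.symm β with hγdef
  have hγH : γ.IsHomogeneous 1 := hsym β hβ
  have hcoeff : ∀ i, i ≠ i0 → γ.coeff (Finsupp.single i 1) = 0 := by
    intro i hi
    rw [hq, coeff_X_mul', if_neg]
    simp [Finsupp.support_single_ne_zero i one_ne_zero, Ne.symm hi]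
  have hγ : γ = C (γ.coeff (Finsupp.single i0 1)) * X i0 := by
    conv_lhs => rw [linear_rep hγH]
    rw [Finset.sum_eq_single i0]
    · intro i _ hi
      rw [hcoeff i hi, map_zero, zero_mul]
    · simp
  refine ⟨γ.coeff (Finsupp.single i0 1), ?_⟩
  have h3 := congrArg e hγ
  rw [AlgEquiv.apply_symm_apply] at h3
  have h4 : e (C (γ.coeff (Finsupp.single i0 1))) = C (γ.coeff (Finsupp.single i0 1)) := by
    rw [← algebraMap_eq, AlgEquiv.commutes, algebraMap_eq]
  rw [h3, map_mul, he, h4]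

/-- Each hyperplane of the arrangement is invariant by the associated foliation:
for every linear factor α = Σⱼ cⱼ xⱼ of Q and all indices i, j, the linear form α
divides cᵢ·aⱼ - cⱼ·aᵢ, i.e. α divides the coefficients of dα ∧ ω. -/
theorem hyperplanes_invariant_by_foliation
    (n d k u : ℕ) (hd : 1 ≤ d) (hk : 2 ≤ k)
    (F G : MvPolynomial (Fin (n + 1)) ℂ)
    (hF : F.IsHomogeneous d) (hG : G.IsHomogeneous d)
    (hFcr : CompletelyReducible n F) (hGcr : CompletelyReducible n G)
    (hcop : RelPrime n F G)
    (c : Fin k → ℂ × ℂ)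
    (hprop : ∀ i j, i ≠ j → (c i).1 * (c j).2 ≠ (c i).2 * (c j).1)
    (P : Fin k → MvPolynomial (Fin (n + 1)) ℂ)
    (hP : ∀ i, P i = C (c i).1 * F + C (c i).2 * G)
    (hP0 : P ⟨0, by omega⟩ = F) (hP1 : P ⟨1, by omega⟩ = G)
    (hPcr : ∀ i, CompletelyReducible n (P i))
    (α : Fin u → MvPolynomial (Fin (n + 1)) ℂ)
    (hα : ∀ i, IsLinearForm n (α i))
    (hαprop : ∀ i j, i ≠ j → ∀ t : ℂ, α i ≠ C t * α j)
    (m : Fin u → ℕ) (hm : ∀ i, 1 ≤ m i)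
    (hQt : ∏ i, P i = ∏ i, α i ^ m i)
    (a : Fin (n + 1) → MvPolynomial (Fin (n + 1)) ℂ)
    (ha : ∀ i, a i * ∏ j, α j ^ (m j - 1) = F * pderiv i G - G * pderiv i F) :
    ∀ t : Fin u, ∀ i j : Fin (n + 1),
      α t ∣ (C ((α t).coeff (Finsupp.single i 1)) * a j
              - C ((α t).coeff (Finsupp.single j 1)) * a i) := by
  intro t i j
  have hA0 : α t ≠ 0 := (hα t).1
  have hAH : (α t).IsHomogeneous 1 := (hα t).2
  have hAprime : Prime (α t) := linear_prime hA0 hAH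
  -- the linear form cannot divide two distinct members of the pencil
  have hdvdFG : ∀ s r : Fin k, s ≠ r → α t ∣ P s → α t ∣ P r → False := by
    intro s r hsr h1 h2
    have hν : (c s).1 * (c r).2 - (c s).2 * (c r).1 ≠ 0 := sub_ne_zero.mpr (hprop s r hsr)
    have hFid : C ((c s).1 * (c r).2 - (c s).2 * (c r).1) * F
        = C (c r).2 * P s - C (c s).2 * P r := by
      rw [hP s, hP r]; simp only [map_sub, map_mul]; ring
    have hGid : C ((c s).1 * (c r).2 - (c s).2 * (c r).1) * G
        = C (c s).1 * P r - C (c r).1 * P s := by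
      rw [hP s, hP r]; simp only [map_sub, map_mul]; ring
    have hdF : α t ∣ F := by
      have h3 : α t ∣ C ((c s).1 * (c r).2 - (c s).2 * (c r).1) * F := by
        rw [hFid]; exact dvd_sub (h1.mul_left _) (h2.mul_left _)
      have h4 := h3.mul_left (C ((c s).1 * (c r).2 - (c s).2 * (c r).1)⁻¹)
      rwa [← mul_assoc, ← map_mul, inv_mul_cancel₀ hν, map_one, one_mul] at h4
    have hdG : α t ∣ G := by
      have h3 : α t ∣ C ((c s).1 * (c r).2 - (c s).2 * (c r).1) * G := by
        rw [hGid]; exact dvd_sub (h2.mul_left _) (h1.mul_left _)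
      have h4 := h3.mul_left (C ((c s).1 * (c r).2 - (c s).2 * (c r).1)⁻¹)
      rwa [← mul_assoc, ← map_mul, inv_mul_cancel₀ hν, map_one, one_mul] at h4
    exact hAprime.not_isUnit (hcop _ hdF hdG)
  -- α t divides some member P s
  have hd1 : α t ∣ ∏ i, P i := by
    rw [hQt]
    exact dvd_trans (dvd_pow_self (α t) (by have := hm t; omega))
      (Finset.dvd_prod_of_mem _ (Finset.mem_univ t))
  obtain ⟨s, -, hs⟩ := hAprime.exists_mem_finset_dvd hd1
  have hnotrest : ¬ α t ∣ ∏ r ∈ Finset.univ.erase s, P r := by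
    intro hd
    obtain ⟨r, hr, hdr⟩ := hAprime.exists_mem_finset_dvd hd
    exact hdvdFG s r (Ne.symm (Finset.mem_erase.mp hr).1) hs hdr
  have hd2 : α t ^ (m t) ∣ P s := by
    apply hAprime.pow_dvd_of_dvd_mul_right _ hnotrest
    have h5 : α t ^ m t ∣ ∏ i, P i := by
      rw [hQt]; exact Finset.dvd_prod_of_mem _ (Finset.mem_univ t)
    rwa [← Finset.mul_prod_erase _ _ (Finset.mem_univ s)] at h5
  obtain ⟨B, hB⟩ := hd2
  -- pick another member
  obtain ⟨r, hrs⟩ : ∃ r : Fin k, r ≠ s := by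
    by_cases h : s = (⟨0, by omega⟩ : Fin k)
    · exact ⟨⟨1, by omega⟩, by rw [h]; intro hc; simpa using congrArg Fin.val hc⟩
    · exact ⟨⟨0, by omega⟩, fun hc => h hc.symm⟩
  have hμ : (c s).1 * (c r).2 - (c s).2 * (c r).1 ≠ 0 :=
    sub_ne_zero.mpr (hprop s r (Ne.symm hrs))
  set μ : ℂ := (c s).1 * (c r).2 - (c s).2 * (c r).1 with hμdef
  set D : MvPolynomial (Fin (n+1)) ℂ := ∏ jj ∈ Finset.univ.erase t, α jj ^ (m jj - 1) with hDdef
  have hprodsplit : ∏ jj, α jj ^ (m jj - 1) = α t ^ (m t - 1) * D :=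
    (Finset.mul_prod_erase _ _ (Finset.mem_univ t)).symm
  have hDnot : ¬ α t ∣ D := by
    intro hd
    obtain ⟨jj, hjj, hdj⟩ := hAprime.exists_mem_finset_dvd hd
    have hjt : jj ≠ t := (Finset.mem_erase.mp hjj).1
    have hdvdαj : α t ∣ α jj := hAprime.dvd_of_dvd_pow hdj
    obtain ⟨dd, hdd⟩ := linear_dvd_linear hA0 hAH (hα jj).2 hdvdαj
    exact hαprop jj t hjt dd hdd
  have hpow : α t ^ m t = α t ^ (m t - 1) * α t := by
    rw [← pow_succ]; congr 1; have := hm t; omega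
  have key : ∀ i : Fin (n+1), C μ * a i * D =
      α t * (B * pderiv i (P r) - pderiv i B * P r)
        - (m t : MvPolynomial (Fin (n+1)) ℂ)
            * C ((α t).coeff (Finsupp.single i 1)) * B * P r := by
    intro i
    apply mul_left_cancel₀ (pow_ne_zero (m t - 1) hA0)
    have H1 : C μ * (F * pderiv i G - G * pderiv i F)
        = P s * pderiv i (P r) - P r * pderiv i (P s) := by
      rw [hP s, hP r, hμdef]
      simp only [map_sub, map_mul, map_add, pderiv_C_mul]
      ring
    have H2 : a i * (α t ^ (m t - 1) * D) = F * pderiv i G - G * pderiv i F := by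
      rw [← hprodsplit]; exact ha i
    have H3 : P s = (α t ^ (m t - 1) * α t) * B := by rw [hB, ← hpow]
    have H4 : pderiv i (P s) = (m t : MvPolynomial (Fin (n+1)) ℂ)
          * α t ^ (m t - 1) * C ((α t).coeff (Finsupp.single i 1)) * B
        + (α t ^ (m t - 1) * α t) * pderiv i B := by
      rw [hB, pderiv_mul, pderiv_pow, pderiv_linear hAH i, hpow]
      try ring
    linear_combination (C μ) * H2 + H1 + pderiv i (P r) * H3 - P r * H4
  have hfin : C μ * (C ((α t).coeff (Finsupp.single i 1)) * a j
        - C ((α t).coeff (Finsupp.single j 1)) * a i) * D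
      = α t * (C ((α t).coeff (Finsupp.single i 1))
            * (B * pderiv j (P r) - pderiv j B * P r)
          - C ((α t).coeff (Finsupp.single j 1))
            * (B * pderiv i (P r) - pderiv i B * P r)) := by
    linear_combination C ((α t).coeff (Finsupp.single i 1)) * key j
      - C ((α t).coeff (Finsupp.single j 1)) * key i
  have hdvd2 : α t ∣ C μ * (C ((α t).coeff (Finsupp.single i 1)) * a j
      - C ((α t).coeff (Finsupp.single j 1)) * a i) * D := by
    rw [hfin]; exact dvd_mul_right _ _
  rcases hAprime.2.2 _ _ hdvd2 with h | h
  · rcases hAprime.2.2 _ _ h with h' | h'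
    · exfalso
      have hCμ : IsUnit (C μ : MvPolynomial (Fin (n+1)) ℂ) :=
        IsUnit.of_mul_eq_one (C μ⁻¹) (by rw [← map_mul, mul_inv_cancel₀ hμ, map_one])
      exact hAprime.not_isUnit (isUnit_of_dvd_unit h' hCμ)
    · exact h'
  · exact absurd h hDnot

end
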